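/- A connected graph G on n vertices satisfies γ_{R2}(G) = n−1 if and only if G is isomorphic to C_3, P_3, or P_4. -/

import Mathlib

open Finset Classical in
/-- The Roman `{2}`-domination number of a finite graph: the minimum weight of a
function `f : V → {0,1,2}` such that every vertex `v` with `f v = 0` satisfies
`∑_{u ∈ N(v)} f u ≥ 2`. -/
noncomputable def roman2 {V : Type*} [Fintype V] (G : SimpleGraph V) : ℕ :=
  sInf {w | ∃ f : V → ℕ, (∀ v, f v ≤ 2) ∧
    (∀ v, f v = 0 → 2 ≤ ∑ u ∈ Finset.univ.filter (fun u => G.Adj v u), f u) ∧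
    w = ∑ v, f v}

open Finset Classical in
/-- The domination number. -/
noncomputable def domNum {V : Type*} [Fintype V] (G : SimpleGraph V) : ℕ :=
  sInf {k | ∃ S : Finset V, S.card = k ∧ ∀ v, v ∉ S → ∃ u ∈ S, G.Adj u v}

open Finset Classical in
/-- The 2-domination number. -/
noncomputable def twoDomNum {V : Type*} [Fintype V] (G : SimpleGraph V) : ℕ :=
  sInf {k | ∃ S : Finset V, S.card = k ∧
    ∀ v, v ∉ S → 2 ≤ (S.filter (fun u => G.Adj u v)).card}

namespace Roman2Aux

open Finset Classical

set_option linter.unusedSectionVars false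

variable {V : Type*} [Fintype V] {G : SimpleGraph V}

lemma roman2_le (f : V → ℕ) (h1 : ∀ v, f v ≤ 2)
    (h2 : ∀ v, f v = 0 → 2 ≤ ∑ u ∈ Finset.univ.filter (fun u => G.Adj v u), f u) :
    roman2 G ≤ ∑ v, f v :=
  Nat.sInf_le ⟨f, h1, h2, rfl⟩

lemma roman2_spec (G : SimpleGraph V) : ∃ f : V → ℕ, (∀ v, f v ≤ 2) ∧
    (∀ v, f v = 0 → 2 ≤ ∑ u ∈ Finset.univ.filter (fun u => G.Adj v u), f u) ∧
    roman2 G = ∑ v, f v := by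
  have hne : Set.Nonempty {w | ∃ f : V → ℕ, (∀ v, f v ≤ 2) ∧
      (∀ v, f v = 0 → 2 ≤ ∑ u ∈ Finset.univ.filter (fun u => G.Adj v u), f u) ∧
      w = ∑ v, f v} :=
    ⟨∑ _v : V, 1, fun _ => 1, fun _ => one_le_two, fun v h => by simp at h, rfl⟩
  exact Nat.sInf_mem hne

lemma roman2_iso_le {W : Type*} [Fintype W] {H : SimpleGraph W} (e : G ≃g H) :
    roman2 G ≤ roman2 H := by
  obtain ⟨f, h1, h2, h3⟩ := roman2_spec H
  rw [h3, ← Equiv.sum_comp e.toEquiv f]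
  refine roman2_le _ (fun v => h1 _) ?_
  intro v hv
  refine le_trans (h2 (e v) hv) (le_of_eq ?_)
  refine (Finset.sum_equiv e.toEquiv ?_ (fun u _ => rfl)).symm
  intro u
  simp only [Finset.mem_filter, Finset.mem_univ, true_and]
  exact (e.map_adj_iff).symm

lemma roman2_iso {W : Type*} [Fintype W] {H : SimpleGraph W} (e : G ≃g H) :
    roman2 G = roman2 H :=
  le_antisymm (roman2_iso_le e) (roman2_iso_le e.symm)

lemma one_le_roman2 (hcard : 1 ≤ Fintype.card V) (G : SimpleGraph V) : 1 ≤ roman2 G := by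
  obtain ⟨f, h1, h2, h3⟩ := roman2_spec G
  rw [h3]
  by_contra hlt
  push_neg at hlt
  have hz : ∀ v, f v = 0 := by
    intro v
    exact Finset.sum_eq_zero_iff.mp (by omega) v (mem_univ v)
  obtain ⟨v⟩ : Nonempty V := Fintype.card_pos_iff.mp (by omega)
  have h := h2 v (hz v)
  have hle : (∑ u ∈ Finset.univ.filter (fun u => G.Adj v u), f u) ≤ ∑ v, f v :=
    Finset.sum_le_sum_of_subset (Finset.filter_subset _ _)
  omega

lemma two_le_roman2 (hcard : 2 ≤ Fintype.card V) (G : SimpleGraph V) : 2 ≤ roman2 G := by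
  obtain ⟨f, h1, h2, h3⟩ := roman2_spec G
  rw [h3]
  by_contra hlt
  push_neg at hlt
  have hsum1 : ∑ v, f v ≤ 1 := by omega
  have : ∃ v, f v = 0 := by
    by_contra hc
    push_neg at hc
    have h1' : ∀ v, 1 ≤ f v := fun v => Nat.one_le_iff_ne_zero.mpr (hc v)
    have : Fintype.card V ≤ ∑ v, f v := by
      simpa using Finset.sum_le_sum (fun v (_ : v ∈ univ) => h1' v)
    omega
  obtain ⟨v, hv⟩ := this
  have h := h2 v hv
  have hle : (∑ u ∈ Finset.univ.filter (fun u => G.Adj v u), f u) ≤ ∑ v, f v :=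
    Finset.sum_le_sum_of_subset (Finset.filter_subset _ _)
  omega

lemma roman2_add_degree_le (v : V) : roman2 G + G.degree v ≤ Fintype.card V + 1 := by
  classical
  set A := G.neighborFinset v with hA
  set f : V → ℕ := fun u => if u = v then 2 else if u ∈ A then 0 else 1 with hf
  have hvA : v ∉ A := by simp [hA]
  have hsum : ∑ u, f u = 2 + (Fintype.card V - (G.degree v + 1)) := by
    have hsub : insert v A ⊆ (univ : Finset V) := Finset.subset_univ _
    rw [← Finset.sum_sdiff hsub]
    have h1 : ∑ u ∈ insert v A, f u = 2 := by
      rw [Finset.sum_insert hvA]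
      have : ∑ u ∈ A, f u = 0 := Finset.sum_eq_zero (by
        intro u hu
        have huv : u ≠ v := fun h => hvA (h ▸ hu)
        simp [hf, huv, hu])
      rw [this]; simp [hf]
    have h2 : ∑ u ∈ univ \ insert v A, f u = (univ \ insert v A).card := by
      rw [Finset.card_eq_sum_ones]
      refine Finset.sum_congr rfl ?_
      intro u hu
      simp only [Finset.mem_sdiff, Finset.mem_insert, not_or] at hu
      simp [hf, hu.2.1, hu.2.2]
    rw [h1, h2, Finset.card_sdiff_of_subset hsub]
    have : (insert v A).card = G.degree v + 1 := by
      rw [Finset.card_insert_of_notMem hvA, SimpleGraph.card_neighborFinset_eq_degree]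
    rw [this, Finset.card_univ]
    omega
  have hvalid : ∀ u, f u = 0 → 2 ≤ ∑ w ∈ Finset.univ.filter (fun w => G.Adj u w), f w := by
    intro u hu
    have huv : u ≠ v ∧ u ∈ A := by
      by_contra hc
      simp only [hf] at hu
      rcases eq_or_ne u v with h | h
      · simp [h] at hu
      · by_cases h2 : u ∈ A
        · exact hc ⟨h, h2⟩
        · simp [h, h2] at hu
    have hadj : G.Adj u v := ((G.mem_neighborFinset v u).mp huv.2).symm
    have hmem : v ∈ Finset.univ.filter (fun w => G.Adj u w) := by simp [hadj]
    calc (2:ℕ) = f v := by simp [hf]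
    _ ≤ _ := Finset.single_le_sum (fun i _ => Nat.zero_le _) hmem
  have hle := roman2_le f (by intro u; simp only [hf]; split <;> [omega; (split <;> omega)]) hvalid
  have hdlt : G.degree v < Fintype.card V := G.degree_lt_card_verts v
  omega

lemma closed_set (hconn : G.Connected) {S : Finset V} {x : V} (hne : x ∈ S)
    (hcl : ∀ a ∈ S, ∀ b, G.Adj a b → b ∈ S) (v : V) : v ∈ S := by
  have h : ∀ (a b : V) (_ : G.Walk a b), a ∈ S → b ∈ S := by
    intro a b w
    induction w with
    | nil => exact id
    | cons h p ih => intro ha; exact ih (hcl _ ha _ h)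
  obtain ⟨w⟩ := hconn.preconnected x v
  exact h _ _ w hne

lemma exists_exit (hconn : G.Connected) {S : Finset V} {x : V} (hx : x ∈ S)
    (hlt : S.card < Fintype.card V) : ∃ a ∈ S, ∃ b, b ∉ S ∧ G.Adj a b := by
  by_contra h
  push_neg at h
  have hcl : ∀ a ∈ S, ∀ b, G.Adj a b → b ∈ S := by
    intro a ha b hadj
    by_contra hb
    exact (h a ha b hb) hadj
  have hsub : (univ : Finset V) ⊆ S := fun v _ => closed_set hconn hx hcl v
  have := Finset.card_le_card hsub
  simp [Finset.card_univ] at this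
  omega

lemma deg_ge_three {a b c x : V} (h1 : G.Adj x a) (h2 : G.Adj x b) (h3 : G.Adj x c)
    (hab : a ≠ b) (hac : a ≠ c) (hbc : b ≠ c) : 3 ≤ G.degree x := by
  have hsub : ({a, b, c} : Finset V) ⊆ G.neighborFinset x := by
    intro y hy
    simp only [Finset.mem_insert, Finset.mem_singleton] at hy
    rcases hy with rfl | rfl | rfl <;> simpa [SimpleGraph.mem_neighborFinset]
  calc 3 = ({a, b, c} : Finset V).card := by
        rw [Finset.card_insert_of_notMem (by simp [hab, hac]),
          Finset.card_insert_of_notMem (by simp [hbc]), Finset.card_singleton]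
  _ ≤ _ := Finset.card_le_card hsub

lemma path3 (hconn : G.Connected) (h3 : 3 ≤ Fintype.card V) :
    ∃ a b c : V, a ≠ b ∧ a ≠ c ∧ b ≠ c ∧ G.Adj a b ∧ G.Adj b c := by
  obtain ⟨a0⟩ : Nonempty V := Fintype.card_pos_iff.mp (by omega)
  obtain ⟨x, hx, y, hy, hxy⟩ := exists_exit (S := {a0}) hconn (Finset.mem_singleton_self a0)
    (by simp; omega)
  simp only [Finset.mem_singleton] at hx hy
  subst hx
  obtain ⟨x', hx', z, hz, hxz⟩ := exists_exit (S := {x, y}) hconn (Finset.mem_insert_self x _)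
    (by
      have : ({x, y} : Finset V).card ≤ 2 := (Finset.card_insert_le _ _).trans (by simp)
      omega)
  simp only [Finset.mem_insert, Finset.mem_singleton, not_or] at hx' hz
  rcases hx' with rfl | rfl
  · exact ⟨y, x', z, hxy.ne', fun h => hz.2 h.symm, fun h => hz.1 h.symm, hxy.symm, hxz⟩
  · exact ⟨x, x', z, hxy.ne, fun h => hz.1 h.symm, fun h => hz.2 h.symm, hxy, hxz⟩

lemma path4 (hconn : G.Connected) (hdeg : ∀ v, G.degree v ≤ 2) (h4 : 4 ≤ Fintype.card V) :
    ∃ a b c d : V, a ≠ b ∧ a ≠ c ∧ a ≠ d ∧ b ≠ c ∧ b ≠ d ∧ c ≠ d ∧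
      G.Adj a b ∧ G.Adj b c ∧ G.Adj c d := by
  obtain ⟨a, b, c, hab, hac, hbc, h1, h2⟩ := path3 hconn (by omega)
  obtain ⟨x, hx, y, hy, hxy⟩ := exists_exit (S := {a, b, c}) hconn (Finset.mem_insert_self a _)
    (by
      have : ({a, b, c} : Finset V).card ≤ 3 :=
        (Finset.card_insert_le _ _).trans (by have := Finset.card_insert_le b ({c} : Finset V); simp at this; omega)
      omega)
  simp only [Finset.mem_insert, Finset.mem_singleton, not_or] at hx hy
  obtain ⟨hya, hyb, hyc⟩ := hy
  rcases hx with rfl | rfl | rfl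
  · exact ⟨y, x, b, c, hya, hyb, hyc, hab, hac, hbc, hxy.symm, h1, h2⟩
  · exact absurd (hdeg x) (by
      have := deg_ge_three (G := G) h1.symm h2 hxy hac (Ne.symm hya) (Ne.symm hyc)
      omega)
  · exact ⟨a, b, x, y, hab, hac, Ne.symm hya, hbc, Ne.symm hyb, hxy.ne, h1, h2, hxy⟩

lemma path5 (hconn : G.Connected) (hdeg : ∀ v, G.degree v ≤ 2) (h5 : 5 ≤ Fintype.card V) :
    ∃ a b c d e : V, a ≠ b ∧ a ≠ c ∧ a ≠ d ∧ a ≠ e ∧ b ≠ c ∧ b ≠ d ∧ b ≠ e ∧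
      c ≠ d ∧ c ≠ e ∧ d ≠ e ∧ G.Adj a b ∧ G.Adj b c ∧ G.Adj c d ∧ G.Adj d e := by
  obtain ⟨a, b, c, d, hab, hac, had, hbc, hbd, hcd, h1, h2, h3⟩ := path4 hconn hdeg (by omega)
  obtain ⟨x, hx, y, hy, hxy⟩ := exists_exit (S := {a, b, c, d}) hconn (Finset.mem_insert_self a _)
    (by
      have : ({a, b, c, d} : Finset V).card ≤ 4 := by
        refine (Finset.card_insert_le _ _).trans ?_
        have : ({b, c, d} : Finset V).card ≤ 3 :=
          (Finset.card_insert_le _ _).trans (by have := Finset.card_insert_le c ({d} : Finset V); simp at this; omega)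
        omega
      omega)
  simp only [Finset.mem_insert, Finset.mem_singleton, not_or] at hx hy
  obtain ⟨hya, hyb, hyc, hyd⟩ := hy
  rcases hx with rfl | rfl | rfl | rfl
  · exact ⟨y, x, b, c, d, hya, hyb, hyc, hyd, hab, hac, had, hbc, hbd, hcd,
      hxy.symm, h1, h2, h3⟩
  · exact absurd (hdeg x) (by
      have := deg_ge_three (G := G) h1.symm h2 hxy hac (Ne.symm hya) (Ne.symm hyc)
      omega)
  · exact absurd (hdeg x) (by
      have := deg_ge_three (G := G) h2.symm h3 hxy hbd (Ne.symm hyb) (Ne.symm hyd)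
      omega)
  · exact ⟨a, b, c, x, y, hab, hac, had, Ne.symm hya, hbc, hbd, Ne.symm hyb, hcd,
      Ne.symm hyc, hxy.ne, h1, h2, h3, hxy⟩

lemma iso_three (a b c : V) (hab : a ≠ b) (hac : a ≠ c) (hbc : b ≠ c)
    (hmem : ∀ v : V, v = a ∨ v = b ∨ v = c) (H : SimpleGraph (Fin 3))
    (e1 : G.Adj a b ↔ H.Adj 0 1) (e2 : G.Adj b c ↔ H.Adj 1 2) (e3 : G.Adj a c ↔ H.Adj 0 2) :
    Nonempty (G ≃g H) := by
  have key : ∀ v w : Fin 3, G.Adj (![a,b,c] v) (![a,b,c] w) ↔ H.Adj v w := by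
    intro v w
    fin_cases v <;> fin_cases w <;>
      simp only [Matrix.cons_val_zero, Matrix.cons_val_one, Matrix.head_cons,
        Matrix.cons_val_two, Matrix.tail_cons] <;>
      first
      | exact iff_of_false (G.loopless.irrefl _) (H.loopless.irrefl _)
      | exact e1
      | exact e2
      | exact e3
      | (rw [G.adj_comm, H.adj_comm]; first | exact e1 | exact e2 | exact e3)
  have hinj : Function.Injective ![a,b,c] := by
    intro i j hij
    fin_cases i <;> fin_cases j <;> first | rfl | (exfalso; simp_all)
  have hsurj : Function.Surjective ![a,b,c] := by
    intro v
    rcases hmem v with rfl | rfl | rfl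
    exacts [⟨0, rfl⟩, ⟨1, rfl⟩, ⟨2, rfl⟩]
  exact ⟨(⟨Equiv.ofBijective ![a,b,c] ⟨hinj, hsurj⟩, fun {i j} => key i j⟩ :
    H ≃g G).symm⟩

lemma iso_four (a b c d : V) (hab : a ≠ b) (hac : a ≠ c) (had : a ≠ d) (hbc : b ≠ c)
    (hbd : b ≠ d) (hcd : c ≠ d)
    (hmem : ∀ v : V, v = a ∨ v = b ∨ v = c ∨ v = d) (H : SimpleGraph (Fin 4))
    (e1 : G.Adj a b ↔ H.Adj 0 1) (e2 : G.Adj b c ↔ H.Adj 1 2) (e3 : G.Adj c d ↔ H.Adj 2 3)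
    (e4 : G.Adj a c ↔ H.Adj 0 2) (e5 : G.Adj a d ↔ H.Adj 0 3) (e6 : G.Adj b d ↔ H.Adj 1 3) :
    Nonempty (G ≃g H) := by
  have key : ∀ v w : Fin 4, G.Adj (![a,b,c,d] v) (![a,b,c,d] w) ↔ H.Adj v w := by
    intro v w
    fin_cases v <;> fin_cases w <;>
      simp only [Matrix.cons_val_zero, Matrix.cons_val_one, Matrix.head_cons,
        Matrix.cons_val_two, Matrix.tail_cons, Matrix.cons_val_three] <;>
      first
      | exact iff_of_false (G.loopless.irrefl _) (H.loopless.irrefl _)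
      | exact e1
      | exact e2
      | exact e3
      | exact e4
      | exact e5
      | exact e6
      | (rw [G.adj_comm, H.adj_comm];
         first | exact e1 | exact e2 | exact e3 | exact e4 | exact e5 | exact e6)
  have hinj : Function.Injective ![a,b,c,d] := by
    intro i j hij
    fin_cases i <;> fin_cases j <;> first | rfl | (exfalso; simp_all)
  have hsurj : Function.Surjective ![a,b,c,d] := by
    intro v
    rcases hmem v with rfl | rfl | rfl | rfl
    exacts [⟨0, rfl⟩, ⟨1, rfl⟩, ⟨2, rfl⟩, ⟨3, rfl⟩]
  exact ⟨(⟨Equiv.ofBijective ![a,b,c,d] ⟨hinj, hsurj⟩, fun {i j} => key i j⟩ :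
    H ≃g G).symm⟩

instance pathGraphAdjDec (n : ℕ) : DecidableRel (SimpleGraph.pathGraph n).Adj :=
  fun _ _ => decidable_of_iff _ SimpleGraph.pathGraph_adj.symm

lemma filter_inst_eq {α : Type*} (p : α → Prop) (h h' : DecidablePred p) (s : Finset α) :
    @Finset.filter α p h s = @Finset.filter α p h' s := by
  rw [Subsingleton.elim h h']

lemma roman2_le' [DecidableRel G.Adj] (f : V → ℕ) (h1 : ∀ v, f v ≤ 2)
    (h2 : ∀ v, f v = 0 → 2 ≤ ∑ u ∈ Finset.univ.filter (fun u => G.Adj v u), f u) :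
    roman2 G ≤ ∑ v, f v := by
  refine roman2_le f h1 ?_
  intro v hv
  rw [filter_inst_eq _ _ (fun u => inferInstance)]
  exact h2 v hv

lemma roman2_spec' {W : Type*} [Fintype W] (G : SimpleGraph W) [DecidableRel G.Adj] :
    ∃ f : W → ℕ, (∀ v, f v ≤ 2) ∧
    (∀ v, f v = 0 → 2 ≤ ∑ u ∈ Finset.univ.filter (fun u => G.Adj v u), f u) ∧
    roman2 G = ∑ v, f v := by
  obtain ⟨f, h1, h2, h3⟩ := roman2_spec G
  refine ⟨f, h1, ?_, h3⟩
  intro v hv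
  rw [filter_inst_eq _ (fun u => inferInstance) _]
  exact h2 v hv

lemma roman2_cycle3 : roman2 (SimpleGraph.cycleGraph 3) = 2 := by
  refine le_antisymm ?_ (two_le_roman2 (by simp) _)
  have hval : ∀ v, (![2,0,0] : Fin 3 → ℕ) v = 0 →
      2 ≤ ∑ u ∈ Finset.univ.filter (fun u => (SimpleGraph.cycleGraph 3).Adj v u),
        (![2,0,0] : Fin 3 → ℕ) u := by decide
  have h := roman2_le' ![2,0,0] (by decide) hval
  refine le_trans h ?_
  simp [Fin.sum_univ_succ]

lemma roman2_path3 : roman2 (SimpleGraph.pathGraph 3) = 2 := by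
  refine le_antisymm ?_ (two_le_roman2 (by simp) _)
  have hval : ∀ v, (![0,2,0] : Fin 3 → ℕ) v = 0 →
      2 ≤ ∑ u ∈ Finset.univ.filter (fun u => (SimpleGraph.pathGraph 3).Adj v u),
        (![0,2,0] : Fin 3 → ℕ) u := by decide
  have h := roman2_le' ![0,2,0] (by decide) hval
  refine le_trans h ?_
  simp [Fin.sum_univ_succ]

lemma roman2_path4 : roman2 (SimpleGraph.pathGraph 4) = 3 := by
  refine le_antisymm ?_ ?_
  · have hval : ∀ v, (![0,2,0,1] : Fin 4 → ℕ) v = 0 →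
        2 ≤ ∑ u ∈ Finset.univ.filter (fun u => (SimpleGraph.pathGraph 4).Adj v u),
          (![0,2,0,1] : Fin 4 → ℕ) u := by decide
    have h := roman2_le' ![0,2,0,1] (by decide) hval
    refine le_trans h ?_
    simp [Fin.sum_univ_succ]
  · obtain ⟨f, h1, h2, h3⟩ := roman2_spec' (SimpleGraph.pathGraph 4)
    rw [h3]
    have key : ∀ g : Fin 4 → Fin 3,
        (∀ v, (g v : ℕ) = 0 →
          2 ≤ ∑ u ∈ Finset.univ.filter (fun u => (SimpleGraph.pathGraph 4).Adj v u), (g u : ℕ)) →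
        3 ≤ ∑ v, (g v : ℕ) := by decide
    have := key (fun v => ⟨f v, by have := h1 v; omega⟩) ?_
    · simpa using this
    · intro v hv
      simpa using h2 v hv


lemma two_le_sum_pair (f : V → ℕ) {v p q : V} (hp : G.Adj v p) (hq : G.Adj v q)
    (hpq : p ≠ q) (hfp : 1 ≤ f p) (hfq : 1 ≤ f q) :
    2 ≤ ∑ u ∈ Finset.univ.filter (fun u => G.Adj v u), f u := by
  have hsub : ({p, q} : Finset V) ⊆ Finset.univ.filter (fun u => G.Adj v u) := by
    intro y hy
    simp only [Finset.mem_insert, Finset.mem_singleton] at hy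
    rcases hy with rfl | rfl <;> simp [hp, hq]
  calc (2:ℕ) ≤ f p + f q := by omega
  _ = ∑ u ∈ ({p, q} : Finset V), f u := (Finset.sum_pair hpq).symm
  _ ≤ _ := Finset.sum_le_sum_of_subset hsub

end Roman2Aux


open Roman2Aux

theorem roman2_eq_card_sub_one_iff {V : Type*} [Fintype V] (G : SimpleGraph V)
    (hconn : G.Connected) :
    roman2 G + 1 = Fintype.card V ↔
      Nonempty (G ≃g SimpleGraph.cycleGraph 3) ∨
      Nonempty (G ≃g SimpleGraph.pathGraph 3) ∨
      Nonempty (G ≃g SimpleGraph.pathGraph 4) := by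
  classical
  constructor
  · intro h
    have hdeg : ∀ v, G.degree v ≤ 2 := by
      intro v
      have := roman2_add_degree_le (G := G) v
      omega
    have hc1 : 1 ≤ Fintype.card V := by omega
    have hc3 : 3 ≤ Fintype.card V := by
      rcases Nat.lt_or_ge (Fintype.card V) 2 with hlt | hge
      · have := one_le_roman2 hc1 G
        omega
      · have := two_le_roman2 hge G
        omega
    have hc5 : Fintype.card V < 5 := by
      by_contra hge
      push_neg at hge
      obtain ⟨a, b, c, d, e, hab, hac, had, hae, hbc, hbd, hbe, hcd, hce, hde,
        h1, h2, h3, h4⟩ := path5 hconn hdeg hge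
      classical
      set f : V → ℕ := fun v => if v = b ∨ v = d then 0 else 1 with hf
      have hval : ∀ v, f v = 0 →
          2 ≤ ∑ u ∈ Finset.univ.filter (fun u => G.Adj v u), f u := by
        intro v hv
        have hv' : v = b ∨ v = d := by
          by_contra hc
          simp [hf, hc] at hv
        rcases hv' with rfl | rfl
        · exact two_le_sum_pair f h1.symm h2 hac
            (by simp [hf, hab, had]) (by simp [hf, Ne.symm hbc, hcd])
        · exact two_le_sum_pair f h3.symm h4 hce
            (by simp [hf, Ne.symm hbc, hcd]) (by simp [hf, Ne.symm hbe, Ne.symm hde])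
      have hle := roman2_le f (by intro v; simp only [hf]; split <;> omega) hval
      have hsum : ∑ v, f v = Fintype.card V - 2 := by
        have hsplit : ∑ v, f v =
            ∑ v ∈ Finset.univ.filter (fun v => v = b ∨ v = d), (0:ℕ) +
            ∑ v ∈ Finset.univ.filter (fun v => ¬(v = b ∨ v = d)), (1:ℕ) :=
          Finset.sum_ite _ _
        have hfil : Finset.univ.filter (fun v => v = b ∨ v = d) = {b, d} := by
          ext v; simp
        have hcards := Finset.card_filter_add_card_filter_not
          (s := (Finset.univ : Finset V)) (p := fun v => v = b ∨ v = d)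
        rw [hfil] at hcards
        have hbd2 : ({b, d} : Finset V).card = 2 := by
          rw [Finset.card_insert_of_notMem (by simp [hbd]), Finset.card_singleton]
        rw [hsplit, Finset.sum_const_zero, Finset.sum_const, smul_eq_mul, mul_one,
          Finset.card_univ] at *
        omega
      omega
    have hc34 : Fintype.card V = 3 ∨ Fintype.card V = 4 := by omega
    rcases hc34 with hcard | hcard
    · obtain ⟨a, b, c, hab, hac, hbc, h1, h2⟩ := path3 hconn (by omega)
      have huniv : ({a, b, c} : Finset V) = Finset.univ := by
        apply Finset.eq_univ_of_card
        rw [hcard, Finset.card_insert_of_notMem (by simp [hab, hac]),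
          Finset.card_insert_of_notMem (by simp [hbc]), Finset.card_singleton]
      have hmem : ∀ v : V, v = a ∨ v = b ∨ v = c := by
        intro v
        have : v ∈ ({a, b, c} : Finset V) := huniv ▸ Finset.mem_univ v
        simpa using this
      by_cases hadj : G.Adj a c
      · exact Or.inl (iso_three a b c hab hac hbc hmem _
          (iff_of_true h1 (by decide)) (iff_of_true h2 (by decide))
          (iff_of_true hadj (by decide)))
      · exact Or.inr (Or.inl (iso_three a b c hab hac hbc hmem _
          (iff_of_true h1 (by decide)) (iff_of_true h2 (by decide))
          (iff_of_false hadj (by decide))))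
    · obtain ⟨a, b, c, d, hab, hac, had, hbc, hbd, hcd, h1, h2, h3⟩ :=
        path4 hconn hdeg (by omega)
      have huniv : ({a, b, c, d} : Finset V) = Finset.univ := by
        apply Finset.eq_univ_of_card
        rw [hcard, Finset.card_insert_of_notMem (by simp [hab, hac, had]),
          Finset.card_insert_of_notMem (by simp [hbc, hbd]),
          Finset.card_insert_of_notMem (by simp [hcd]), Finset.card_singleton]
      have hmem : ∀ v : V, v = a ∨ v = b ∨ v = c ∨ v = d := by
        intro v
        have : v ∈ ({a, b, c, d} : Finset V) := huniv ▸ Finset.mem_univ v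
        simpa using this
      have hnac : ¬G.Adj a c := by
        intro hx
        have := deg_ge_three (G := G) h2.symm h3 hx.symm hbd (Ne.symm hab) (Ne.symm had)
        have := hdeg c
        omega
      have hnbd : ¬G.Adj b d := by
        intro hx
        have := deg_ge_three (G := G) h1.symm h2 hx hac had hcd
        have := hdeg b
        omega
      by_cases hnad : G.Adj a d
      · exfalso
        classical
        set f : V → ℕ := fun v => if v = a ∨ v = c then 1 else 0 with hf
        have hval : ∀ v, f v = 0 →
            2 ≤ ∑ u ∈ Finset.univ.filter (fun u => G.Adj v u), f u := by
          intro v hv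
          have hv' : v = b ∨ v = d := by
            rcases hmem v with rfl | rfl | rfl | rfl
            · simp [hf] at hv
            · exact Or.inl rfl
            · simp [hf] at hv
            · exact Or.inr rfl
          rcases hv' with rfl | rfl
          · exact two_le_sum_pair f h1.symm h2 hac (by simp [hf]) (by simp [hf])
          · exact two_le_sum_pair f hnad.symm h3.symm hac (by simp [hf]) (by simp [hf])
        have hle := roman2_le f (by intro v; simp only [hf]; split <;> omega) hval
        have hsum : ∑ v, f v = 2 := by
          have hsplit : ∑ v, f v =
              ∑ v ∈ Finset.univ.filter (fun v => v = a ∨ v = c), (1:ℕ) +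
              ∑ v ∈ Finset.univ.filter (fun v => ¬(v = a ∨ v = c)), (0:ℕ) :=
            Finset.sum_ite _ _
          have hfil : Finset.univ.filter (fun v => v = a ∨ v = c) = {a, c} := by
            ext v; simp
          rw [hsplit, hfil, Finset.sum_const_zero, Finset.sum_const, smul_eq_mul, mul_one,
            Finset.card_insert_of_notMem (by simp [hac]), Finset.card_singleton]
          norm_num
        omega
      · exact Or.inr (Or.inr (iso_four a b c d hab hac had hbc hbd hcd hmem _
          (iff_of_true h1 (by decide)) (iff_of_true h2 (by decide))
          (iff_of_true h3 (by decide)) (iff_of_false hnac (by decide))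
          (iff_of_false hnad (by decide)) (iff_of_false hnbd (by decide))))
  · intro h
    rcases h with he | he | he <;> obtain ⟨e⟩ := he
    · have h1 : roman2 G = roman2 (SimpleGraph.cycleGraph 3) := roman2_iso e
      have h2 : Fintype.card V = Fintype.card (Fin 3) := Fintype.card_congr e.toEquiv
      rw [h1, roman2_cycle3, h2]
      simp
    · have h1 : roman2 G = roman2 (SimpleGraph.pathGraph 3) := roman2_iso e
      have h2 : Fintype.card V = Fintype.card (Fin 3) := Fintype.card_congr e.toEquiv
      rw [h1, roman2_path3, h2]
      simp
    · have h1 : roman2 G = roman2 (SimpleGraph.pathGraph 4) := roman2_iso e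
      have h2 : Fintype.card V = Fintype.card (Fin 4) := Fintype.card_congr e.toEquiv
      rw [h1, roman2_path4, h2]
      simp
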